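/- Let y ∈ Y_{Q,n} and α be a root with coroot α∨. Then n_α divides ⟨y, α⟩, where n_α = n / gcd(n, Q(α∨)). Consequently ⟨y,α⟩·α∨ ∈ Y_{Q,n}^{sc}, the sublattice generated by the elements n_β β∨. -/

import Mathlib

theorem stmt1 {Y ι : Type*} [AddCommGroup Y] [Module ℤ Y]
    (B : Y →ₗ[ℤ] Y →ₗ[ℤ] ℤ) (Q : Y → ℤ)
    (coroot : ι → Y) (pair : Y → ι → ℤ)
    (hBQ : ∀ (y : Y) (i : ι), B y (coroot i) = Q (coroot i) * pair y i)
    (n : ℕ) (hn : 0 < n)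
    (y : Y) (hy : ∀ y' : Y, (n : ℤ) ∣ B y y')
    (α : ι) :
    ((n / Int.gcd (n : ℤ) (Q (coroot α)) : ℕ) : ℤ) ∣ pair y α ∧
      pair y α • coroot α ∈
        Submodule.span ℤ
          (Set.range fun i : ι =>
            ((n / Int.gcd (n : ℤ) (Q (coroot i)) : ℕ) : ℤ) • coroot i) := by
  set q : ℤ := Q (coroot α) with hq
  set g : ℕ := Int.gcd (n : ℤ) q with hg
  have hgn : g ∣ n := by
    have h := Int.gcd_dvd_left (a := (n : ℤ)) (b := q)
    exact_mod_cast h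
  have hg0 : 0 < g := Nat.pos_of_ne_zero (fun h => by
    have := Int.gcd_eq_zero_iff.mp (hg ▸ h)
    omega)
  have hdvd : (n : ℤ) ∣ q * pair y α := by
    rw [← hBQ]; exact hy _
  -- write n = g * m, q = g * q'
  obtain ⟨m, hm⟩ := hgn
  have hq' : (g : ℤ) ∣ q := Int.gcd_dvd_right _ _
  obtain ⟨q', hq'e⟩ := hq'
  have hnm : (n : ℤ) = g * m := by exact_mod_cast hm
  have hdvd2 : (m : ℤ) ∣ q' * pair y α := by
    rcases hdvd with ⟨c, hc⟩
    refine ⟨c, ?_⟩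
    have hgz : (g : ℤ) ≠ 0 := by exact_mod_cast hg0.ne'
    have : (g : ℤ) * (q' * pair y α) = (g : ℤ) * ((m : ℤ) * c) := by
      rw [← mul_assoc, ← hq'e, hc, hnm]; ring
    exact mul_left_cancel₀ hgz this
  have hcop : IsCoprime (m : ℤ) q' := by
    have h1 : Int.gcd ((g : ℤ) * m) ((g : ℤ) * q') = g * Int.gcd (m : ℤ) q' := by
      rw [Int.gcd_mul_left]; simp
    have h2 : Int.gcd (n : ℤ) q = g := rfl
    rw [← hnm, ← hq'e, h2] at h1
    have : Int.gcd (m : ℤ) q' = 1 := by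
      have := h1
      nlinarith [Nat.zero_le (Int.gcd (m : ℤ) q')]
    exact Int.isCoprime_iff_gcd_eq_one.mpr this
  have hdvdpair : (m : ℤ) ∣ pair y α := (hcop.dvd_of_dvd_mul_left) hdvd2
  have hmeq : n / g = m := by
    rw [hm]; exact Nat.mul_div_cancel_left m hg0
  constructor
  · rw [hmeq]; exact hdvdpair
  · obtain ⟨k, hk⟩ := hdvdpair
    have hmem : ((n / Int.gcd (n : ℤ) (Q (coroot α)) : ℕ) : ℤ) • coroot α ∈
        Submodule.span ℤ (Set.range fun i : ι =>
          ((n / Int.gcd (n : ℤ) (Q (coroot i)) : ℕ) : ℤ) • coroot i) :=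
      Submodule.subset_span ⟨α, rfl⟩
    have h3 : ((n / Int.gcd (n : ℤ) (Q (coroot α)) : ℕ) : ℤ) = (m : ℤ) := by
      rw [← hg, hmeq]
    rw [h3] at hmem
    rw [hk, mul_comm, mul_zsmul]
    exact zsmul_mem hmem k
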